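/- Jacobi's triple product identity: ∏_{n≥1}(1-q^n)(1+zq^{n-1/2})(1+z⁻¹q^{n-1/2}) = ∑_{m∈Z} z^m q^{m²/2}, as an identity of formal Laurent series in z with coefficients formal power series in q^{1/2}. -/

import Mathlib

open Finset Filter Topology

open Finset

noncomputable def jtpPhi (Q : ℂ) (n : ℕ) : ℂ := ∏ j ∈ Finset.range n, (1 - Q ^ (j + 1))

noncomputable def jtpQb (Q : ℂ) (n k : ℕ) : ℂ :=
  if k ≤ n then jtpPhi Q n / (jtpPhi Q k * jtpPhi Q (n - k)) else 0

noncomputable def jtpA (Q : ℂ) (n k : ℕ) : ℂ := Q ^ (k * (k - 1) / 2) * jtpQb Q n k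

variable {Q : ℂ}

lemma jtp_one_sub_pow_ne (hQ : ‖Q‖ < 1) (j : ℕ) : 1 - Q ^ (j + 1) ≠ 0 := by
  intro h
  have h1 : Q ^ (j + 1) = 1 := by linear_combination -h
  have : ‖Q ^ (j + 1)‖ < 1 := by
    rw [norm_pow]
    exact pow_lt_one₀ (norm_nonneg _) hQ (Nat.succ_ne_zero j)
  rw [h1, norm_one] at this
  exact lt_irrefl _ this

lemma jtpPhi_zero : jtpPhi Q 0 = 1 := by simp [jtpPhi]

lemma jtpPhi_succ (n : ℕ) : jtpPhi Q (n + 1) = jtpPhi Q n * (1 - Q ^ (n + 1)) := by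
  simp [jtpPhi, Finset.prod_range_succ]

lemma jtpPhi_ne_zero (hQ : ‖Q‖ < 1) (n : ℕ) : jtpPhi Q n ≠ 0 :=
  Finset.prod_ne_zero_iff.2 fun j _ => jtp_one_sub_pow_ne hQ j

lemma jtpQb_zero (hQ : ‖Q‖ < 1) (n : ℕ) : jtpQb Q n 0 = 1 := by
  simp [jtpQb, jtpPhi_zero, div_self (jtpPhi_ne_zero hQ n)]

lemma jtpQb_self (hQ : ‖Q‖ < 1) (n : ℕ) : jtpQb Q n n = 1 := by
  simp [jtpQb, jtpPhi_zero, div_self (jtpPhi_ne_zero hQ n)]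

lemma jtpQb_of_gt {n k : ℕ} (h : n < k) : jtpQb Q n k = 0 := by
  simp [jtpQb, not_le.2 h]

lemma jtpQb_pascal (hQ : ‖Q‖ < 1) {n k : ℕ} (hk : k ≤ n) :
    jtpQb Q (n + 1) (k + 1) = jtpQb Q n (k + 1) + Q ^ (n - k) * jtpQb Q n k := by
  rcases eq_or_lt_of_le hk with rfl | hlt
  · simp [jtpQb_self hQ, jtpQb_of_gt (Nat.lt_succ_self _)]
  · have hk1n : k + 1 ≤ n := hlt
    have h1 : jtpQb Q (n + 1) (k + 1) =
        jtpPhi Q (n + 1) / (jtpPhi Q (k + 1) * jtpPhi Q (n - k)) := by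
      rw [jtpQb, if_pos (by omega), Nat.succ_sub_succ]
    have h2 : jtpQb Q n (k + 1) =
        jtpPhi Q n / (jtpPhi Q (k + 1) * jtpPhi Q (n - k - 1)) := by
      rw [jtpQb, if_pos hk1n, Nat.sub_sub]
    have h3 : jtpQb Q n k = jtpPhi Q n / (jtpPhi Q k * jtpPhi Q (n - k)) := by
      rw [jtpQb, if_pos hk]
    have e1 : jtpPhi Q (n + 1) = jtpPhi Q n * (1 - Q ^ (n + 1)) := jtpPhi_succ n
    have e2 : jtpPhi Q (n - k) = jtpPhi Q (n - k - 1) * (1 - Q ^ (n - k)) := by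
      have : n - k = (n - k - 1) + 1 := by omega
      rw [this, jtpPhi_succ]
      rw [show n - k - 1 + 1 = n - k by omega]
    have e3 : jtpPhi Q (k + 1) = jtpPhi Q k * (1 - Q ^ (k + 1)) := jtpPhi_succ k
    have hp : ∀ m : ℕ, jtpPhi Q m ≠ 0 := jtpPhi_ne_zero hQ
    have hne1 := jtp_one_sub_pow_ne hQ k
    have hne2 : (1 - Q ^ (n - k)) ≠ 0 := by
      have : n - k = (n - k - 1) + 1 := by omega
      rw [this]; exact jtp_one_sub_pow_ne hQ _
    have hne3 := jtp_one_sub_pow_ne hQ n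
    have hpow : Q ^ (n - k) * Q ^ (k + 1) = Q ^ (n + 1) := by
      rw [← pow_add]; congr 1; omega
    have hpn := hp n
    have hpk := hp k
    have hpy := hp (n - k - 1)
    rw [h1, h2, h3, e1, e2, e3, ← hpow]
    set p := jtpPhi Q n with hpdef
    set x := jtpPhi Q k with hxdef
    set y := jtpPhi Q (n - k - 1) with hydef
    set a := Q ^ (k + 1) with hadef
    set b := Q ^ (n - k) with hbdef
    field_simp
    ring

lemma jtpA_zero (hQ : ‖Q‖ < 1) (n : ℕ) : jtpA Q n 0 = 1 := by
  simp [jtpA, jtpQb_zero hQ]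

lemma jtpA_pascal (hQ : ‖Q‖ < 1) {n k : ℕ} (hk : k ≤ n) :
    jtpA Q (n + 1) (k + 1) = jtpA Q n (k + 1) + Q ^ n * jtpA Q n k := by
  have hkk : (k + 1) * (k + 1 - 1) / 2 = k * (k - 1) / 2 + k := by
    have h0 : k + 1 - 1 = k := rfl
    rw [h0]
    have hmul : (k + 1) * k = k * (k - 1) + 2 * k := by
      cases k with
      | zero => simp
      | succ m =>
        have h1 : m + 1 - 1 = m := rfl
        rw [h1]
        ring
    rw [hmul, Nat.add_mul_div_left _ _ (by norm_num : 0 < 2)]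
  have hexp : k * (k - 1) / 2 + k + (n - k) = n + k * (k - 1) / 2 := by
    generalize k * (k - 1) / 2 = e
    omega
  calc jtpA Q (n + 1) (k + 1)
      = Q ^ (k * (k - 1) / 2 + k) * (jtpQb Q n (k + 1) + Q ^ (n - k) * jtpQb Q n k) := by
        rw [jtpA, hkk, jtpQb_pascal hQ hk]
    _ = Q ^ (k * (k - 1) / 2 + k) * jtpQb Q n (k + 1)
          + Q ^ (k * (k - 1) / 2 + k + (n - k)) * jtpQb Q n k := by
        rw [pow_add _ (k * (k - 1) / 2 + k) (n - k)]
        ring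
    _ = jtpA Q n (k + 1) + Q ^ n * jtpA Q n k := by
        rw [hexp, jtpA, jtpA, hkk, pow_add]
        ring

/-- The q-binomial (Cauchy) theorem. -/
lemma jtp_qbinom (hQ : ‖Q‖ < 1) (w : ℂ) :
    ∀ n : ℕ, ∏ j ∈ range n, (1 + w * Q ^ j) = ∑ k ∈ range (n + 1), jtpA Q n k * w ^ k := by
  intro n
  induction n with
  | zero => simp [jtpA_zero hQ]
  | succ n ih =>
    rw [Finset.prod_range_succ, ih]
    rw [Finset.sum_range_succ' (fun k => jtpA Q (n + 1) k * w ^ k)]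
    have step : ∀ k ∈ range (n + 1),
        jtpA Q (n + 1) (k + 1) * w ^ (k + 1) =
          jtpA Q n (k + 1) * w ^ (k + 1) + (Q ^ n * w) * (jtpA Q n k * w ^ k) := by
      intro k hk
      rw [jtpA_pascal hQ (Nat.lt_succ_iff.1 (Finset.mem_range.1 hk))]
      ring
    rw [Finset.sum_congr rfl step, Finset.sum_add_distrib, ← Finset.mul_sum]
    have hA0 : jtpA Q (n + 1) 0 * w ^ 0 = jtpA Q n 0 * w ^ 0 := by
      simp [jtpA_zero hQ]
    have hsum : ∑ k ∈ range (n + 1), jtpA Q n (k + 1) * w ^ (k + 1) + jtpA Q n 0 * w ^ 0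
        = ∑ k ∈ range (n + 1), jtpA Q n k * w ^ k := by
      rw [← Finset.sum_range_succ' (fun k => jtpA Q n k * w ^ k) (n + 1)]
      rw [Finset.sum_range_succ]
      simp [jtpA, jtpQb_of_gt (Nat.lt_succ_self n)]
    rw [hA0]
    rw [add_right_comm, hsum]
    ring


section Part2
variable {z u : ℂ}

lemma jtp_sum_odd (N : ℕ) : ∑ i ∈ range N, (2 * i + 1) = N * N := by
  induction N with
  | zero => simp
  | succ n ih => rw [Finset.sum_range_succ, ih]; ring

lemma jtp_normQ (hu : ‖u‖ < 1) : ‖u ^ 2‖ < 1 := by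
  rw [norm_pow]
  calc ‖u‖ ^ 2 ≤ ‖u‖ := by nlinarith [norm_nonneg u]
    _ < 1 := hu

lemma jtp_finite (hz : z ≠ 0) (hu0 : u ≠ 0) (hu : ‖u‖ < 1) (N : ℕ) :
    ∏ i ∈ range N, ((1 + z * u ^ (2 * i + 1)) * (1 + z⁻¹ * u ^ (2 * i + 1)))
      = ∑ k ∈ range (2 * N + 1),
          jtpQb (u ^ 2) (2 * N) k * z ^ ((k : ℤ) - N) * u ^ (((k : ℤ) - N) ^ 2) := by
  have hQ : ‖u ^ 2‖ < 1 := jtp_normQ hu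
  rw [show 2 * N = N + N from two_mul N]
  have base := jtp_qbinom hQ (z * u ^ ((1 : ℤ) - 2 * N)) (N + N)
  -- rewrite LHS factors
  have fact : ∀ j : ℕ, 1 + (z * u ^ ((1 : ℤ) - 2 * N)) * (u ^ 2) ^ j
      = 1 + z * u ^ (2 * (j : ℤ) + 1 - 2 * N) := by
    intro j
    congr 1
    rw [mul_assoc]
    congr 1
    rw [← zpow_natCast (u ^ 2) j, ← zpow_natCast u 2, ← zpow_mul, ← zpow_add₀ hu0]
    congr 1
    push_cast
    ring
  rw [Finset.prod_congr rfl (fun j _ => fact j)] at base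
  -- split the product
  rw [Finset.prod_range_add] at base
  have right : ∀ i : ℕ, 1 + z * u ^ (2 * ((N + i : ℕ) : ℤ) + 1 - 2 * N)
      = 1 + z * u ^ (2 * i + 1) := by
    intro i
    congr 1
    rw [show 2 * ((N + i : ℕ) : ℤ) + 1 - 2 * N = ((2 * i + 1 : ℕ) : ℤ) by push_cast; ring,
      zpow_natCast]
  rw [Finset.prod_congr rfl (fun i _ => right i)] at base
  -- reflect the left half
  rw [← Finset.prod_range_reflect (fun j => 1 + z * u ^ (2 * (j : ℤ) + 1 - 2 * N)) N] at base
  have left : ∀ j ∈ range N, 1 + z * u ^ (2 * ((N - 1 - j : ℕ) : ℤ) + 1 - 2 * N)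
      = (z * (u ^ (2 * j + 1))⁻¹) * (1 + z⁻¹ * u ^ (2 * j + 1)) := by
    intro j hj
    have hjN : j < N := Finset.mem_range.1 hj
    have hexp : 2 * ((N - 1 - j : ℕ) : ℤ) + 1 - 2 * N = -((2 * j + 1 : ℕ) : ℤ) := by
      have h4 : ((N - 1 - j : ℕ) : ℤ) = (N : ℤ) - 1 - j := by
        have : N - 1 - j + (1 + j) = N := by omega
        have := congrArg (fun t : ℕ => (t : ℤ)) this
        push_cast at this
        linarith
      rw [h4]; push_cast; ring
    rw [hexp, zpow_neg, zpow_natCast]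
    have hv : u ^ (2 * j + 1) ≠ 0 := pow_ne_zero _ hu0
    field_simp
    ring
  rw [Finset.prod_congr rfl left, Finset.prod_mul_distrib, Finset.prod_mul_distrib,
    Finset.prod_const, Finset.card_range, Finset.prod_inv_distrib,
    Finset.prod_pow_eq_pow_sum, jtp_sum_odd] at base
  -- rewrite RHS terms
  have hterm : ∀ k : ℕ, jtpA (u ^ 2) (N + N) k * (z * u ^ ((1 : ℤ) - 2 * N)) ^ k
      = jtpQb (u ^ 2) (N + N) k * z ^ (k : ℕ) * u ^ (((k : ℤ) - N) ^ 2) * (u ^ (N * N))⁻¹ := by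
    intro k
    rw [jtpA, mul_pow]
    have h1 : ((u ^ 2) ^ (k * (k - 1) / 2) : ℂ) = u ^ ((k * (k - 1) : ℕ) : ℤ) := by
      rw [← pow_mul, ← zpow_natCast]
      congr 1
      have he : Even (k * (k - 1)) := by
        rcases Nat.even_or_odd k with h | h
        · exact h.mul_right _
        · rcases k with _ | m
          · simp
          · exact Even.mul_left (by simpa [Nat.odd_add_one] using h) _
      obtain ⟨c, hc⟩ := he
      omega
    have h2 : ((u ^ ((1 : ℤ) - 2 * N)) ^ k : ℂ) = u ^ (((1 : ℤ) - 2 * N) * k) := by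
      rw [← zpow_natCast (u ^ ((1 : ℤ) - 2 * N)) k, ← zpow_mul]
    have hcast : ((k * (k - 1) : ℕ) : ℤ) = (k : ℤ) ^ 2 - k := by
      rcases k with _ | m
      · simp
      · push_cast [Nat.succ_sub_one]
        ring
    have h3 : (u : ℂ) ^ ((k * (k - 1) : ℕ) : ℤ) * u ^ (((1 : ℤ) - 2 * N) * k)
        = u ^ (((k : ℤ) - N) ^ 2) * (u ^ (N * N))⁻¹ := by
      rw [← zpow_add₀ hu0]
      rw [show ((u : ℂ) ^ (N * N))⁻¹ = u ^ (-((N * N : ℕ) : ℤ)) by rw [zpow_neg, zpow_natCast]]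
      rw [← zpow_add₀ hu0]
      congr 1
      rw [hcast]
      push_cast
      ring
    rw [h1, h2]
    linear_combination (jtpQb (u ^ 2) (N + N) k * z ^ k) * h3
  rw [Finset.sum_congr rfl (fun k _ => hterm k)] at base
  -- cancel the constants
  have hzN : (z : ℂ) ^ N ≠ 0 := pow_ne_zero _ hz
  have huNN : (u : ℂ) ^ (N * N) ≠ 0 := pow_ne_zero _ hu0
  have hgoal : ∀ k ∈ range (N + N + 1),
      jtpQb (u ^ 2) (N + N) k * z ^ ((k : ℤ) - N) * u ^ (((k : ℤ) - N) ^ 2)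
      = (jtpQb (u ^ 2) (N + N) k * z ^ (k : ℕ) * u ^ (((k : ℤ) - N) ^ 2) * (u ^ (N * N))⁻¹)
          * ((z ^ N)⁻¹ * u ^ (N * N)) := by
    intro k _
    rw [show ((k : ℤ) - N) = ((k : ℕ) : ℤ) + (-(N : ℤ)) by push_cast; ring,
      zpow_add₀ hz, zpow_natCast, zpow_neg, zpow_natCast]
    field_simp
  rw [Finset.sum_congr rfl hgoal, ← Finset.sum_mul, ← base, Finset.prod_mul_distrib]
  field_simp

end Part2


noncomputable def jtpP (Q : ℂ) : ℝ := Real.exp (‖Q‖ / (1 - ‖Q‖))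
noncomputable def jtpD (Q : ℂ) : ℝ := Real.exp (-(‖Q‖ / ((1 - ‖Q‖) * (1 - ‖Q‖))))

section Bounds
variable {Q : ℂ}

lemma jtpP_pos (Q : ℂ) : 0 < jtpP Q := Real.exp_pos _
lemma jtpD_pos (Q : ℂ) : 0 < jtpD Q := Real.exp_pos _

lemma jtp_geom (hQ : ‖Q‖ < 1) (n : ℕ) :
    ∑ j ∈ range n, ‖Q‖ ^ (j + 1) ≤ ‖Q‖ / (1 - ‖Q‖) := by
  have h0 : (0:ℝ) ≤ ‖Q‖ := norm_nonneg _
  have h1 : (0:ℝ) < 1 - ‖Q‖ := by linarith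
  have h2 : ∑ j ∈ range n, ‖Q‖ ^ (j + 1) = ‖Q‖ * ∑ j ∈ range n, ‖Q‖ ^ j := by
    rw [Finset.mul_sum]
    exact Finset.sum_congr rfl fun j _ => by ring
  rw [h2, div_eq_mul_inv]
  refine mul_le_mul_of_nonneg_left ?_ h0
  calc ∑ j ∈ range n, ‖Q‖ ^ j
      ≤ ∑' j : ℕ, ‖Q‖ ^ j := Summable.sum_le_tsum _ (fun i _ => pow_nonneg h0 i)
        (summable_geometric_of_lt_one h0 hQ)
    _ = (1 - ‖Q‖)⁻¹ := tsum_geometric_of_lt_one h0 hQ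

lemma jtpPhi_norm_le (hQ : ‖Q‖ < 1) (n : ℕ) : ‖jtpPhi Q n‖ ≤ jtpP Q := by
  rw [jtpPhi, norm_prod]
  calc ∏ j ∈ range n, ‖1 - Q ^ (j + 1)‖
      ≤ ∏ j ∈ range n, Real.exp (‖Q‖ ^ (j + 1)) := by
        refine Finset.prod_le_prod (fun j _ => norm_nonneg _) (fun j _ => ?_)
        calc ‖1 - Q ^ (j + 1)‖ ≤ ‖(1:ℂ)‖ + ‖Q ^ (j + 1)‖ := norm_sub_le _ _
          _ = 1 + ‖Q‖ ^ (j + 1) := by rw [norm_one, norm_pow]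
          _ ≤ Real.exp (‖Q‖ ^ (j + 1)) := by
              have := Real.add_one_le_exp (‖Q‖ ^ (j + 1)); linarith
    _ = Real.exp (∑ j ∈ range n, ‖Q‖ ^ (j + 1)) := (Real.exp_sum _ _).symm
    _ ≤ jtpP Q := Real.exp_le_exp.2 (jtp_geom hQ n)

lemma jtp_one_sub_ge (hQ : ‖Q‖ < 1) (j : ℕ) :
    Real.exp (-(‖Q‖ ^ (j + 1) / (1 - ‖Q‖))) ≤ 1 - ‖Q‖ ^ (j + 1) := by
  set x := ‖Q‖ with hx
  have h0 : (0:ℝ) ≤ x := norm_nonneg _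
  have h1 : (0:ℝ) < 1 - x := by linarith
  set t := x ^ (j + 1) with ht
  have ht0 : 0 ≤ t := pow_nonneg h0 _
  have htx : t ≤ x := by
    calc x ^ (j + 1) ≤ x ^ 1 := pow_le_pow_of_le_one h0 hQ.le (by omega)
      _ = x := pow_one x
  set s := t / (1 - x) with hs
  have hs0 : 0 ≤ s := div_nonneg ht0 h1.le
  have h2 : 1 + s ≤ Real.exp s := by have := Real.add_one_le_exp s; linarith
  have h3 : Real.exp (-s) ≤ (1 + s)⁻¹ := by
    rw [Real.exp_neg]
    exact inv_anti₀ (by linarith) h2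
  refine h3.trans ?_
  rw [inv_le_iff_one_le_mul₀ (by linarith)]
  have hexpand : (1 - t) * (1 + s) = 1 + (t * (x - t)) / (1 - x) := by
    rw [hs]
    field_simp
    ring
  have hnn : 0 ≤ t * (x - t) / (1 - x) := div_nonneg (mul_nonneg ht0 (by linarith)) h1.le
  nlinarith [hexpand]

lemma jtpPhi_norm_ge (hQ : ‖Q‖ < 1) (n : ℕ) : jtpD Q ≤ ‖jtpPhi Q n‖ := by
  have h0 : (0:ℝ) ≤ ‖Q‖ := norm_nonneg _
  have h1 : (0:ℝ) < 1 - ‖Q‖ := by linarith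
  rw [jtpPhi, norm_prod]
  calc jtpD Q
      ≤ Real.exp (-((∑ j ∈ range n, ‖Q‖ ^ (j + 1)) / (1 - ‖Q‖))) := by
        apply Real.exp_le_exp.2
        apply neg_le_neg
        rw [← div_div]
        exact (div_le_div_iff_of_pos_right h1).2 (jtp_geom hQ n)
    _ = ∏ j ∈ range n, Real.exp (-(‖Q‖ ^ (j + 1) / (1 - ‖Q‖))) := by
        rw [← Real.exp_sum]
        congr 1
        rw [Finset.sum_div, neg_eq_iff_eq_neg, ← Finset.sum_neg_distrib]
        simp
    _ ≤ ∏ j ∈ range n, (1 - ‖Q‖ ^ (j + 1)) :=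
        Finset.prod_le_prod (fun j _ => (Real.exp_pos _).le) (fun j _ => jtp_one_sub_ge hQ j)
    _ ≤ ∏ j ∈ range n, ‖1 - Q ^ (j + 1)‖ := by
        refine Finset.prod_le_prod (fun j _ => ?_) (fun j _ => ?_)
        · have : ‖Q‖ ^ (j + 1) ≤ 1 := pow_le_one₀ h0 hQ.le
          linarith
        · calc (1:ℝ) - ‖Q‖ ^ (j + 1) = ‖(1:ℂ)‖ - ‖Q ^ (j + 1)‖ := by rw [norm_one, norm_pow]
            _ ≤ ‖1 - Q ^ (j + 1)‖ := norm_sub_norm_le _ _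

lemma jtpQb_norm_le (hQ : ‖Q‖ < 1) (n k : ℕ) :
    ‖jtpQb Q n k‖ ≤ jtpP Q / (jtpD Q * jtpD Q) := by
  have hP := jtpP_pos Q
  have hD := jtpD_pos Q
  rw [jtpQb]
  split_ifs with h
  · rw [norm_div, norm_mul]
    exact div_le_div₀ hP.le (jtpPhi_norm_le hQ n) (by positivity)
      (mul_le_mul (jtpPhi_norm_ge hQ k) (jtpPhi_norm_ge hQ (n - k)) hD.le (norm_nonneg _))
  · rw [norm_zero]
    positivity

end Bounds

section Conv
variable {Q z u : ℂ}

lemma jtp_one_add_ne {w : ℂ} (hw : ‖w‖ < 1) : 1 + w ≠ 0 := by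
  intro h
  have : w = -1 := by linear_combination h
  rw [this] at hw
  simp at hw

lemma jtp_multipliable_one_add (a : ℕ → ℂ) (ha : Summable a) :
    Multipliable (fun n => 1 + a n) := by
  have htend : Tendsto (fun n => ‖a n‖) atTop (𝓝 0) := by
    simpa using ha.tendsto_atTop_zero.norm
  obtain ⟨k, hk⟩ := eventually_atTop.1 (htend.eventually_lt_const (by norm_num : (0:ℝ) < 1/2))
  apply Multipliable.comp_nat_add (k := k)
  have hfn : ∀ n : ℕ, (1 : ℂ) + a (n + k) ≠ 0 := fun n =>
    jtp_one_add_ne ((hk (n + k) (by omega)).trans_le (by norm_num))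
  have hsum : Summable fun n => a (n + k) := (summable_nat_add_iff k).2 ha
  have hlog : Summable fun n => Complex.log (1 + a (n + k)) := by
    apply Summable.of_norm_bounded (g := fun n => 3/2 * ‖a (n + k)‖)
      (hsum.norm.mul_left _)
    intro n
    exact Complex.norm_log_one_add_half_le_self (hk (n + k) (by omega)).le
  exact Complex.multipliable_of_summable_log hlog

lemma jtp_summable_pow (hu : ‖u‖ < 1) (c : ℂ) (b : ℕ) :
    Summable (fun n : ℕ => c * u ^ (2 * n + b)) := by
  apply Summable.of_norm_bounded (g := fun n => ‖c‖ * ‖u‖ ^ n)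
    ((summable_geometric_of_lt_one (norm_nonneg u) hu).mul_left _)
  intro n
  rw [norm_mul, norm_pow]
  exact mul_le_mul_of_nonneg_left
    (pow_le_pow_of_le_one (norm_nonneg u) hu.le (by omega)) (norm_nonneg c)

lemma jtp_multipliable_phi (hQ : ‖Q‖ < 1) :
    Multipliable (fun j : ℕ => 1 - Q ^ (j + 1)) := by
  have h : (fun j : ℕ => 1 - Q ^ (j + 1)) = fun j : ℕ => 1 + (-(Q ^ (j + 1))) := by
    funext j; ring
  rw [h]
  apply jtp_multipliable_one_add
  apply Summable.neg
  have := (summable_geometric_of_norm_lt_one hQ).mul_left Q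
  refine this.congr fun j => ?_
  rw [pow_succ, mul_comm]

lemma jtp_tendsto_phi (hQ : ‖Q‖ < 1) :
    Tendsto (fun n => jtpPhi Q n) atTop (𝓝 (∏' j : ℕ, (1 - Q ^ (j + 1)))) :=
  (jtp_multipliable_phi hQ).hasProd.tendsto_prod_nat

lemma jtp_tprod_phi_ne (hQ : ‖Q‖ < 1) : (∏' j : ℕ, (1 - Q ^ (j + 1))) ≠ 0 := by
  have hD := jtpD_pos Q
  have hnorm : Tendsto (fun n => ‖jtpPhi Q n‖) atTop (𝓝 ‖∏' j : ℕ, (1 - Q ^ (j + 1))‖) :=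
    (jtp_tendsto_phi hQ).norm
  have hge : jtpD Q ≤ ‖∏' j : ℕ, (1 - Q ^ (j + 1))‖ :=
    ge_of_tendsto' hnorm (fun n => jtpPhi_norm_ge hQ n)
  intro h
  rw [h, norm_zero] at hge
  linarith

end Conv

section Limit
variable {Q z u : ℂ}

lemma jtp_tendsto_c (hQ : ‖Q‖ < 1) (m : ℤ) :
    Tendsto (fun N : ℕ => jtpPhi Q N * jtpQb Q (2 * N) (m + N).toNat) atTop (𝓝 1) := by
  set Pi := ∏' j : ℕ, (1 - Q ^ (j + 1)) with hPi
  have hne := jtp_tprod_phi_ne hQ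
  have t1 := jtp_tendsto_phi hQ
  have comp : ∀ σ : ℕ → ℕ, Tendsto σ atTop atTop →
      Tendsto (fun N => jtpPhi Q (σ N)) atTop (𝓝 Pi) := fun σ hσ => t1.comp hσ
  have h2 : Tendsto (fun N : ℕ => 2 * N) atTop atTop :=
    tendsto_atTop_atTop.2 (fun b => ⟨b, fun a ha => by omega⟩)
  have h3 : Tendsto (fun N : ℕ => (m + N).toNat) atTop atTop :=
    tendsto_atTop_atTop.2 (fun b => ⟨b + m.natAbs, fun a ha => by omega⟩)
  have h4 : Tendsto (fun N : ℕ => 2 * N - (m + N).toNat) atTop atTop :=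
    tendsto_atTop_atTop.2 (fun b => ⟨b + m.natAbs, fun a ha => by omega⟩)
  have hmain : Tendsto (fun N => jtpPhi Q N *
      (jtpPhi Q (2 * N) / (jtpPhi Q ((m + N).toNat) * jtpPhi Q (2 * N - (m + N).toNat))))
      atTop (𝓝 (Pi * (Pi / (Pi * Pi)))) :=
    t1.mul ((comp _ h2).div ((comp _ h3).mul (comp _ h4)) (mul_ne_zero hne hne))
  have heq : Pi * (Pi / (Pi * Pi)) = 1 := by rw [hPi]; field_simp
  rw [heq] at hmain
  apply hmain.congr'
  filter_upwards [eventually_ge_atTop m.natAbs] with N hN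
  rw [jtpQb, if_pos (by omega)]

noncomputable def jtpB (u : ℂ) : ℝ := jtpP (u ^ 2) * (jtpP (u ^ 2) / (jtpD (u ^ 2) * jtpD (u ^ 2)))

lemma jtpB_pos (u : ℂ) : 0 < jtpB u := by
  have := jtpP_pos (u ^ 2); have := jtpD_pos (u ^ 2)
  rw [jtpB]; positivity

noncomputable def jtpF (z u : ℂ) (N : ℕ) (m : ℤ) : ℂ :=
  (if m.natAbs ≤ N then jtpPhi (u ^ 2) N * jtpQb (u ^ 2) (2 * N) (m + N).toNat else 0)
    * z ^ m * u ^ (m ^ 2)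

lemma jtpF_tsum (hz : z ≠ 0) (hu0 : u ≠ 0) (hu : ‖u‖ < 1) (N : ℕ) :
    ∑' m : ℤ, jtpF z u N m
      = ∏ n ∈ range N, ((1 - u ^ (2 * (n + 1))) * (1 + z * u ^ (2 * n + 1))
          * (1 + z⁻¹ * u ^ (2 * n + 1))) := by
  have hsplit : ∏ n ∈ range N, ((1 - u ^ (2 * (n + 1))) * (1 + z * u ^ (2 * n + 1))
      * (1 + z⁻¹ * u ^ (2 * n + 1)))
      = jtpPhi (u ^ 2) N * ∑ k ∈ range (2 * N + 1),
          jtpQb (u ^ 2) (2 * N) k * z ^ ((k : ℤ) - N) * u ^ (((k : ℤ) - N) ^ 2) := by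
    rw [← jtp_finite hz hu0 hu N, jtpPhi, ← Finset.prod_mul_distrib]
    refine Finset.prod_congr rfl fun n _ => ?_
    rw [← pow_mul]
    ring
  rw [hsplit, Finset.mul_sum]
  have hvanish : ∀ m ∉ Finset.Icc (-(N : ℤ)) N, jtpF z u N m = 0 := by
    intro m hm
    rw [Finset.mem_Icc] at hm
    rw [jtpF, if_neg (by omega), zero_mul, zero_mul]
  rw [tsum_eq_sum hvanish]
  refine Finset.sum_nbij' (fun m => (m + N).toNat) (fun k => (k : ℤ) - N) ?_ ?_ ?_ ?_ ?_
  · intro m hm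
    rw [Finset.mem_Icc] at hm
    rw [Finset.mem_range]
    omega
  · intro k hk
    rw [Finset.mem_range] at hk
    rw [Finset.mem_Icc]
    omega
  · intro m hm
    rw [Finset.mem_Icc] at hm
    omega
  · intro k hk
    rw [Finset.mem_range] at hk
    omega
  · intro m hm
    rw [Finset.mem_Icc] at hm
    have hcast : (((m + N).toNat : ℤ) - N) = m := by omega
    rw [jtpF, if_pos (by omega), hcast]
    ring

lemma jtpF_tendsto (hu : ‖u‖ < 1) (m : ℤ) :
    Tendsto (fun N => jtpF z u N m) atTop (𝓝 (z ^ m * u ^ (m ^ 2))) := by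
  have hc := jtp_tendsto_c (jtp_normQ hu) m
  have h2 := hc.mul_const (z ^ m * u ^ (m ^ 2))
  rw [one_mul] at h2
  apply h2.congr'
  filter_upwards [eventually_ge_atTop m.natAbs] with N hN
  rw [jtpF, if_pos hN]
  ring

lemma jtp_zpow_bound (hz : z ≠ 0) (m : ℤ) :
    ‖z ^ m‖ ≤ (max ‖z‖ ‖z‖⁻¹) ^ m.natAbs := by
  set n := m.natAbs with hn
  rcases le_or_gt 0 m with h | h
  · have hm : m = (n : ℤ) := by omega
    rw [hm, zpow_natCast, norm_pow]
    exact pow_le_pow_left₀ (norm_nonneg _) (le_max_left _ _) _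
  · have hm : m = -(n : ℤ) := by omega
    rw [hm, zpow_neg, zpow_natCast, norm_inv, norm_pow, ← inv_pow]
    exact pow_le_pow_left₀ (by positivity) (le_max_right _ _) _

lemma jtp_u_zpow (u : ℂ) (m : ℤ) : ‖u ^ (m ^ 2)‖ = ‖u‖ ^ (m.natAbs ^ 2) := by
  rw [show (m ^ 2 : ℤ) = ((m.natAbs ^ 2 : ℕ) : ℤ) by push_cast; rw [sq_abs],
    zpow_natCast, norm_pow]

lemma jtpF_bound (hz : z ≠ 0) (hu : ‖u‖ < 1) (N : ℕ) (m : ℤ) :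
    ‖jtpF z u N m‖ ≤ jtpB u * (max ‖z‖ ‖z‖⁻¹) ^ m.natAbs * ‖u‖ ^ (m.natAbs ^ 2) := by
  have hQ := jtp_normQ hu
  rw [jtpF, norm_mul, norm_mul, jtp_u_zpow]
  have h1 : ‖if m.natAbs ≤ N then jtpPhi (u ^ 2) N * jtpQb (u ^ 2) (2 * N) (m + N).toNat
      else 0‖ ≤ jtpB u := by
    split_ifs with h
    · rw [norm_mul, jtpB]
      exact mul_le_mul (jtpPhi_norm_le hQ N) (jtpQb_norm_le hQ _ _) (norm_nonneg _)
        (jtpP_pos _).le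
    · rw [norm_zero]
      exact (jtpB_pos u).le
  have h2 := jtp_zpow_bound hz m
  have hMnn : (0:ℝ) ≤ (max ‖z‖ ‖z‖⁻¹) ^ m.natAbs := by positivity
  have huy : (0:ℝ) ≤ ‖u‖ ^ (m.natAbs ^ 2) := by positivity
  calc ‖if m.natAbs ≤ N then jtpPhi (u ^ 2) N * jtpQb (u ^ 2) (2 * N) (m + N).toNat else 0‖
        * ‖z ^ m‖ * ‖u‖ ^ (m.natAbs ^ 2)
      ≤ jtpB u * (max ‖z‖ ‖z‖⁻¹) ^ m.natAbs * ‖u‖ ^ (m.natAbs ^ 2) := by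
        refine mul_le_mul_of_nonneg_right ?_ huy
        exact mul_le_mul h1 h2 (norm_nonneg _) (jtpB_pos u).le

lemma jtp_summable_bound (hz : z ≠ 0) (hu0 : u ≠ 0) (hu : ‖u‖ < 1) :
    Summable (fun m : ℤ => jtpB u * (max ‖z‖ ‖z‖⁻¹) ^ m.natAbs * ‖u‖ ^ (m.natAbs ^ 2)) := by
  set M := max ‖z‖ ‖z‖⁻¹ with hM
  set y := ‖u‖ with hy
  have hy0 : 0 < y := norm_pos_iff.2 hu0
  have hM0 : 0 < M := lt_of_lt_of_le (norm_pos_iff.2 hz) (le_max_left _ _)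
  have hB := jtpB_pos u
  have hnat : Summable (fun n : ℕ => jtpB u * M ^ n * y ^ (n ^ 2)) := by
    apply summable_of_ratio_norm_eventually_le (r := 1/2) (by norm_num)
    have ht : Tendsto (fun n : ℕ => M * y ^ (2 * n + 1)) atTop (𝓝 0) := by
      have hpow : Tendsto (fun n : ℕ => y ^ n) atTop (𝓝 0) :=
        tendsto_pow_atTop_nhds_zero_of_lt_one hy0.le hu
      have hcmp : Tendsto (fun n : ℕ => 2 * n + 1) atTop atTop :=
        tendsto_atTop_atTop.2 (fun b => ⟨b, fun a ha => by omega⟩)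
      have := (hpow.comp hcmp).const_mul M
      simpa using this
    filter_upwards [ht.eventually_le_const (by norm_num : (0:ℝ) < 1/2)] with n hn
    rw [Real.norm_of_nonneg (by positivity), Real.norm_of_nonneg (by positivity)]
    have hexp : (n + 1) ^ 2 = n ^ 2 + (2 * n + 1) := by ring
    rw [hexp]
    calc jtpB u * M ^ (n + 1) * y ^ (n ^ 2 + (2 * n + 1))
        = (jtpB u * M ^ n * y ^ (n ^ 2)) * (M * y ^ (2 * n + 1)) := by ring
      _ ≤ (jtpB u * M ^ n * y ^ (n ^ 2)) * (1 / 2) :=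
          mul_le_mul_of_nonneg_left hn (by positivity)
      _ = 1 / 2 * (jtpB u * M ^ n * y ^ (n ^ 2)) := by ring
  apply Summable.of_nat_of_neg
  · refine hnat.congr fun n => ?_
    simp
  · refine hnat.congr fun n => ?_
    simp

end Limit

/-- Jacobi's triple product identity
`∏_{n≥1}(1-qⁿ)(1+zq^{n-1/2})(1+z⁻¹q^{n-1/2}) = ∑_{m∈ℤ} z^m q^{m²/2}`,
stated with `u = q^{1/2}` (so `u^{2n-1} = q^{n-1/2}`, `u^{m²} = q^{m²/2}`) as an
identity of functions for `|u| < 1`, `z ≠ 0`. -/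
theorem jacobi_triple_product (z u : ℂ) (hz : z ≠ 0) (hu : ‖u‖ < 1) :
    (∏' n : ℕ,
      (1 - u ^ (2 * (n + 1))) * (1 + z * u ^ (2 * n + 1)) *
        (1 + z⁻¹ * u ^ (2 * n + 1))) =
    ∑' m : ℤ, z ^ m * u ^ (m ^ 2) := by
  by_cases hu0 : u = 0
  · subst hu0
    have hL : ∀ n : ℕ, (1 - (0:ℂ) ^ (2 * (n + 1))) * (1 + z * 0 ^ (2 * n + 1)) *
        (1 + z⁻¹ * 0 ^ (2 * n + 1)) = 1 := by
      intro n
      rw [zero_pow (by omega), zero_pow (by omega)]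
      ring
    rw [tprod_congr hL, tprod_one]
    have hR : ∀ m : ℤ, m ≠ 0 → z ^ m * (0:ℂ) ^ (m ^ 2) = 0 := by
      intro m hm
      rw [zero_zpow _ (pow_ne_zero 2 hm), mul_zero]
    rw [tsum_eq_single 0 hR]
    simp
  · have hmul : Multipliable (fun n : ℕ => (1 - u ^ (2 * (n + 1))) * (1 + z * u ^ (2 * n + 1))
        * (1 + z⁻¹ * u ^ (2 * n + 1))) := by
      have m1 : Multipliable (fun n : ℕ => 1 - u ^ (2 * (n + 1))) := by
        have h : (fun n : ℕ => 1 - u ^ (2 * (n + 1))) = fun n => 1 + (-1 : ℂ) * u ^ (2 * n + 2) := by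
          funext n
          rw [show 2 * (n + 1) = 2 * n + 2 by ring]
          ring
        rw [h]
        exact jtp_multipliable_one_add _ (jtp_summable_pow hu (-1) 2)
      have m2 : Multipliable (fun n : ℕ => 1 + z * u ^ (2 * n + 1)) :=
        jtp_multipliable_one_add _ (jtp_summable_pow hu z 1)
      have m3 : Multipliable (fun n : ℕ => 1 + z⁻¹ * u ^ (2 * n + 1)) :=
        jtp_multipliable_one_add _ (jtp_summable_pow hu z⁻¹ 1)
      exact ((m1.hasProd.mul m2.hasProd).mul m3.hasProd).multipliable
    have hprod := hmul.hasProd.tendsto_prod_nat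
    have hsum : Tendsto (fun N => ∑' m : ℤ, jtpF z u N m) atTop
        (𝓝 (∑' m : ℤ, z ^ m * u ^ (m ^ 2))) :=
      tendsto_tsum_of_dominated_convergence (jtp_summable_bound hz hu0 hu)
        (fun m => jtpF_tendsto hu m)
        (Filter.Eventually.of_forall fun N m => jtpF_bound hz hu N m)
    have heq : (fun N => ∑' m : ℤ, jtpF z u N m)
        = fun N => ∏ n ∈ range N, ((1 - u ^ (2 * (n + 1))) * (1 + z * u ^ (2 * n + 1))
            * (1 + z⁻¹ * u ^ (2 * n + 1))) := funext fun N => jtpF_tsum hz hu0 hu N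
    rw [heq] at hsum
    exact tendsto_nhds_unique hprod hsum
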